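/- Suppose a ∈ ℝ^n and B ∈ ℝ^{n×n²} satisfy e = a + B(e ⊗ e), x* ∈ ℝ^n satisfies x* = a + B(x* ⊗ x*) with 0 ≤ x* < e entrywise, and L = I − B(x* ⊗ I + I ⊗ x*) is invertible. Let ã ∈ ℝ^n and B̃ ∈ ℝ^{n×n²} satisfy e = ã + B̃(e ⊗ e), and set ΔB = B̃ − B, δ = ‖ΔB‖, ℓ = ‖L⁻¹‖, b̃ = ‖B̃‖, d = ‖x* ⊗ x* − e ⊗ e‖. If ‖x*‖·δ + √(b̃·d·δ) ≤ 1/(2ℓ) and 2ℓδ‖x*‖ + √((1 − 2ℓδ‖x*‖)² − 4ℓ²b̃dδ) > max{ 1 − 2ℓb̃(1 − ‖x*‖), 1 − 2ℓb̃(1 − ‖e − x*‖) }, then there exists x̃ ∈ ℝ^n with x̃ = ã + B̃(x̃ ⊗ x̃), 0 < x̃ < e entrywise, and ‖x̃ − x*‖ ≤ ξ*, where ξ* = 2ℓdδ / (1 − 2ℓδ‖x*‖ + √((1 − 2ℓδ‖x*‖)² − 4ℓ²b̃dδ)). -/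

import Mathlib

open Matrix Filter

noncomputable section

/-- Decode an index `p ∈ Fin (n*n)` (row-major: `p = n*i + j`) into the pair `(i, j)`. -/
def kronDecode {n : ℕ} (p : Fin (n * n)) : Fin n × Fin n :=
  ⟨⟨(p : ℕ) / n, Nat.div_lt_of_lt_mul p.isLt⟩,
   ⟨(p : ℕ) % n, Nat.mod_lt _ (by
      rcases Nat.eq_zero_or_pos n with h | h
      · exact absurd p.isLt (by simp [h])
      · exact h)⟩⟩

/-- Kronecker product of two vectors in `ℝ^n`, as a vector in `ℝ^(n²)`:
`(u ⊗ v)_{n(i-1)+j} = u_i v_j` (row-major). -/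
def kron {n : ℕ} (u v : Fin n → ℝ) : Fin (n * n) → ℝ :=
  fun p => u (kronDecode p).1 * v (kronDecode p).2

/-- Kronecker product `u ⊗ I` of a vector `u ∈ ℝ^n` with the `n×n` identity:
an `n²×n` matrix with entry `u_i · δ_{jk}` at row `(i,j)`, column `k`. -/
def kronVecId {n : ℕ} (u : Fin n → ℝ) : Matrix (Fin (n * n)) (Fin n) ℝ :=
  fun p k => u (kronDecode p).1 * (if (kronDecode p).2 = k then (1 : ℝ) else 0)

/-- Kronecker product `I ⊗ u` of the `n×n` identity with a vector `u ∈ ℝ^n`: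
an `n²×n` matrix with entry `δ_{ik} · u_j` at row `(i,j)`, column `k`. -/
def kronIdVec {n : ℕ} (u : Fin n → ℝ) : Matrix (Fin (n * n)) (Fin n) ℝ :=
  fun p k => (if (kronDecode p).1 = k then (1 : ℝ) else 0) * u (kronDecode p).2

/-- The operator ∞-norm of a real matrix: the maximum absolute row sum.
(The corresponding vector norm on `Fin m → ℝ` is the sup norm `‖·‖`.) -/
def matNorm {m k : ℕ} (M : Matrix (Fin m) (Fin k) ℝ) : ℝ :=
  ⨆ i, ∑ j, |M i j|


lemma rowSum_le_matNorm {m k : ℕ} (M : Matrix (Fin m) (Fin k) ℝ) (i : Fin m) :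
    ∑ j, |M i j| ≤ matNorm M :=
  le_ciSup (Set.Finite.bddAbove (Set.finite_range fun i => ∑ j, |M i j|)) i

lemma matNorm_nonneg {m k : ℕ} (hm : 0 < m) (M : Matrix (Fin m) (Fin k) ℝ) :
    0 ≤ matNorm M := by
  have i : Fin m := ⟨0, hm⟩
  exact le_trans (Finset.sum_nonneg fun j _ => abs_nonneg _) (rowSum_le_matNorm M i)

lemma norm_mulVec_le {m k : ℕ} (hm : 0 < m) (M : Matrix (Fin m) (Fin k) ℝ) (v : Fin k → ℝ) :
    ‖M *ᵥ v‖ ≤ matNorm M * ‖v‖ := by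
  rw [pi_norm_le_iff_of_nonneg (mul_nonneg (matNorm_nonneg hm M) (norm_nonneg v))]
  intro i
  rw [Real.norm_eq_abs]
  calc |(M *ᵥ v) i| ≤ ∑ j, |M i j * v j| := by
        simpa [Matrix.mulVec, dotProduct] using Finset.abs_sum_le_sum_abs (fun j => M i j * v j) Finset.univ
    _ ≤ ∑ j, |M i j| * ‖v‖ := by
        refine Finset.sum_le_sum fun j _ => ?_
        rw [abs_mul]
        exact mul_le_mul_of_nonneg_left (by simpa [Real.norm_eq_abs] using norm_le_pi_norm v j) (abs_nonneg _)
    _ = (∑ j, |M i j|) * ‖v‖ := by rw [Finset.sum_mul]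
    _ ≤ matNorm M * ‖v‖ := mul_le_mul_of_nonneg_right (rowSum_le_matNorm M i) (norm_nonneg v)

lemma norm_kron_le {n : ℕ} (u v : Fin n → ℝ) : ‖kron u v‖ ≤ ‖u‖ * ‖v‖ := by
  rw [pi_norm_le_iff_of_nonneg (mul_nonneg (norm_nonneg u) (norm_nonneg v))]
  intro p
  rw [Real.norm_eq_abs, kron, abs_mul]
  exact mul_le_mul (by simpa [Real.norm_eq_abs] using norm_le_pi_norm u _)
    (by simpa [Real.norm_eq_abs] using norm_le_pi_norm v _) (abs_nonneg _) (norm_nonneg u)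

lemma kron_add_left {n : ℕ} (u w v : Fin n → ℝ) : kron (u + w) v = kron u v + kron w v := by
  funext p; simp [kron, add_mul]

lemma kron_add_right {n : ℕ} (u v w : Fin n → ℝ) : kron u (v + w) = kron u v + kron u w := by
  funext p; simp [kron, mul_add]

lemma kron_sub_left {n : ℕ} (u w v : Fin n → ℝ) : kron (u - w) v = kron u v - kron w v := by
  funext p; simp [kron, sub_mul]

lemma kron_sub_right {n : ℕ} (u v w : Fin n → ℝ) : kron u (v - w) = kron u v - kron u w := by
  funext p; simp [kron, mul_sub]

lemma kronVecId_mulVec {n : ℕ} (u h : Fin n → ℝ) : kronVecId u *ᵥ h = kron u h := by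
  funext p
  simp [Matrix.mulVec, dotProduct, kronVecId, kron, ite_mul, mul_comm]

lemma kronIdVec_mulVec {n : ℕ} (u h : Fin n → ℝ) : kronIdVec u *ᵥ h = kron h u := by
  funext p
  simp [Matrix.mulVec, dotProduct, kronIdVec, kron, ite_mul, mul_comm]

/-- The fixed-point map for the perturbation argument. -/
def Fmap {n : ℕ} (Li : Matrix (Fin n) (Fin n) ℝ) (ΔB Bt : Matrix (Fin n) (Fin (n * n)) ℝ)
    (xs e h : Fin n → ℝ) : Fin n → ℝ :=
  Li *ᵥ (ΔB *ᵥ (kron xs xs - kron e e) + (ΔB *ᵥ (kron xs h + kron h xs) + Bt *ᵥ kron h h))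

lemma Fmap_norm_le {n : ℕ} (hn : 0 < n) (Li : Matrix (Fin n) (Fin n) ℝ)
    (ΔB Bt : Matrix (Fin n) (Fin (n * n)) ℝ) (xs e h : Fin n → ℝ) :
    ‖Fmap Li ΔB Bt xs e h‖ ≤ matNorm Li * (matNorm ΔB * ‖kron xs xs - kron e e‖ +
      (matNorm ΔB * (2 * (‖xs‖ * ‖h‖)) + matNorm Bt * (‖h‖ * ‖h‖))) := by
  refine le_trans (norm_mulVec_le hn _ _) (mul_le_mul_of_nonneg_left ?_ (matNorm_nonneg hn Li))
  refine le_trans (norm_add_le _ _) (add_le_add (norm_mulVec_le hn _ _) ?_)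
  refine le_trans (norm_add_le _ _) (add_le_add ?_ ?_)
  · refine le_trans (norm_mulVec_le hn _ _) (mul_le_mul_of_nonneg_left ?_ (matNorm_nonneg hn ΔB))
    calc ‖kron xs h + kron h xs‖ ≤ ‖kron xs h‖ + ‖kron h xs‖ := norm_add_le _ _
      _ ≤ ‖xs‖ * ‖h‖ + ‖h‖ * ‖xs‖ := add_le_add (norm_kron_le _ _) (norm_kron_le _ _)
      _ = 2 * (‖xs‖ * ‖h‖) := by ring
  · exact le_trans (norm_mulVec_le hn _ _)
      (mul_le_mul_of_nonneg_left (norm_kron_le h h) (matNorm_nonneg hn Bt))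

lemma Fmap_sub {n : ℕ} (Li : Matrix (Fin n) (Fin n) ℝ)
    (ΔB Bt : Matrix (Fin n) (Fin (n * n)) ℝ) (xs e h1 h2 : Fin n → ℝ) :
    Fmap Li ΔB Bt xs e h1 - Fmap Li ΔB Bt xs e h2 =
      Li *ᵥ (ΔB *ᵥ (kron xs (h1 - h2) + kron (h1 - h2) xs) +
        Bt *ᵥ (kron h1 (h1 - h2) + kron (h1 - h2) h2)) := by
  simp only [Fmap, ← Matrix.mulVec_sub, ← Matrix.mulVec_add]

  simp only [kron_sub_right, kron_sub_left]
  simp only [Matrix.mulVec_add, Matrix.mulVec_sub]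
  abel

lemma Fmap_diff_le {n : ℕ} (hn : 0 < n) (Li : Matrix (Fin n) (Fin n) ℝ)
    (ΔB Bt : Matrix (Fin n) (Fin (n * n)) ℝ) (xs e h1 h2 : Fin n → ℝ) :
    ‖Fmap Li ΔB Bt xs e h1 - Fmap Li ΔB Bt xs e h2‖ ≤
      matNorm Li * ((matNorm ΔB * (2 * ‖xs‖) + matNorm Bt * (‖h1‖ + ‖h2‖)) * ‖h1 - h2‖) := by
  rw [Fmap_sub]
  refine le_trans (norm_mulVec_le hn _ _) (mul_le_mul_of_nonneg_left ?_ (matNorm_nonneg hn Li))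
  have t1 : ‖ΔB *ᵥ (kron xs (h1 - h2) + kron (h1 - h2) xs)‖ ≤
      matNorm ΔB * (2 * ‖xs‖) * ‖h1 - h2‖ := by
    refine le_trans (norm_mulVec_le hn _ _) ?_
    have : ‖kron xs (h1 - h2) + kron (h1 - h2) xs‖ ≤ 2 * ‖xs‖ * ‖h1 - h2‖ := by
      calc ‖kron xs (h1 - h2) + kron (h1 - h2) xs‖
          ≤ ‖kron xs (h1 - h2)‖ + ‖kron (h1 - h2) xs‖ := norm_add_le _ _
        _ ≤ ‖xs‖ * ‖h1 - h2‖ + ‖h1 - h2‖ * ‖xs‖ := add_le_add (norm_kron_le _ _) (norm_kron_le _ _)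
        _ = 2 * ‖xs‖ * ‖h1 - h2‖ := by ring
    calc matNorm ΔB * ‖kron xs (h1 - h2) + kron (h1 - h2) xs‖
        ≤ matNorm ΔB * (2 * ‖xs‖ * ‖h1 - h2‖) :=
          mul_le_mul_of_nonneg_left this (matNorm_nonneg hn ΔB)
      _ = matNorm ΔB * (2 * ‖xs‖) * ‖h1 - h2‖ := by ring
  have t2 : ‖Bt *ᵥ (kron h1 (h1 - h2) + kron (h1 - h2) h2)‖ ≤
      matNorm Bt * (‖h1‖ + ‖h2‖) * ‖h1 - h2‖ := by
    refine le_trans (norm_mulVec_le hn _ _) ?_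
    have : ‖kron h1 (h1 - h2) + kron (h1 - h2) h2‖ ≤ (‖h1‖ + ‖h2‖) * ‖h1 - h2‖ := by
      calc ‖kron h1 (h1 - h2) + kron (h1 - h2) h2‖
          ≤ ‖kron h1 (h1 - h2)‖ + ‖kron (h1 - h2) h2‖ := norm_add_le _ _
        _ ≤ ‖h1‖ * ‖h1 - h2‖ + ‖h1 - h2‖ * ‖h2‖ := add_le_add (norm_kron_le _ _) (norm_kron_le _ _)
        _ = (‖h1‖ + ‖h2‖) * ‖h1 - h2‖ := by ring
    calc matNorm Bt * ‖kron h1 (h1 - h2) + kron (h1 - h2) h2‖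
        ≤ matNorm Bt * ((‖h1‖ + ‖h2‖) * ‖h1 - h2‖) :=
          mul_le_mul_of_nonneg_left this (matNorm_nonneg hn Bt)
      _ = matNorm Bt * (‖h1‖ + ‖h2‖) * ‖h1 - h2‖ := by ring
  calc ‖_ + _‖ ≤ _ := norm_add_le _ _
    _ ≤ matNorm ΔB * (2 * ‖xs‖) * ‖h1 - h2‖ + matNorm Bt * (‖h1‖ + ‖h2‖) * ‖h1 - h2‖ :=
        add_le_add t1 t2
    _ = (matNorm ΔB * (2 * ‖xs‖) + matNorm Bt * (‖h1‖ + ‖h2‖)) * ‖h1 - h2‖ := by ring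

lemma Fmap_fixed {n : ℕ}
    (a : Fin n → ℝ) (B : Matrix (Fin n) (Fin (n * n)) ℝ)
    (xs at_ : Fin n → ℝ) (Bt : Matrix (Fin n) (Fin (n * n)) ℝ)
    (e : Fin n → ℝ)
    (heq : e = a + B *ᵥ kron e e)
    (hxs : xs = a + B *ᵥ kron xs xs)
    (L : Matrix (Fin n) (Fin n) ℝ)
    (hL : L = 1 - B * (kronVecId xs + kronIdVec xs))
    (hLinv : IsUnit L)
    (heqt : e = at_ + Bt *ᵥ kron e e)
    (ΔB : Matrix (Fin n) (Fin (n * n)) ℝ) (hΔB : ΔB = Bt - B)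
    (h : Fin n → ℝ) (hfix : Fmap L⁻¹ ΔB Bt xs e h = h) :
    xs + h = at_ + Bt *ᵥ kron (xs + h) (xs + h) := by
  have hdet : IsUnit L.det := (Matrix.isUnit_iff_isUnit_det L).mp hLinv
  have E1 : L *ᵥ h = ΔB *ᵥ (kron xs xs - kron e e) +
      (ΔB *ᵥ (kron xs h + kron h xs) + Bt *ᵥ kron h h) := by
    conv_lhs => rw [← hfix]
    simp only [Fmap]
    rw [Matrix.mulVec_mulVec, Matrix.mul_nonsing_inv L hdet, Matrix.one_mulVec]
  have E2 : L *ᵥ h = h - B *ᵥ (kron xs h + kron h xs) := by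
    rw [hL, Matrix.sub_mulVec, Matrix.one_mulVec, ← Matrix.mulVec_mulVec, Matrix.add_mulVec,
      kronVecId_mulVec, kronIdVec_mulVec]
  rw [hΔB] at E1
  rw [show kron (xs + h) (xs + h) = kron xs xs + kron xs h + (kron h xs + kron h h) by
    simp only [kron_add_left, kron_add_right]; abel]
  simp only [Matrix.sub_mulVec, Matrix.mulVec_sub, Matrix.mulVec_add] at E1 E2 ⊢
  funext i
  have e1 := congrFun E1 i
  have e2 := congrFun E2 i
  have e3 := congrFun hxs i
  have e4 := congrFun heq i
  have e5 := congrFun heqt i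
  simp only [Pi.add_apply, Pi.sub_apply] at e1 e2 e3 e4 e5 ⊢
  linarith
set_option maxHeartbeats 4000000 in
/-- Theorem 2.5 of the paper, existence form: under the consistency
conditions for the original and perturbed QVEs, with `0 ≤ x* < e` entrywise and
`L = I − B(x*⊗I + I⊗x*)` invertible, if `‖x*‖δ + √(b̃dδ) ≤ 1/(2ℓ)` and
`2ℓδ‖x*‖ + √((1 − 2ℓδ‖x*‖)² − 4ℓ²b̃dδ) > max{1 − 2ℓb̃(1 − ‖x*‖), 1 − 2ℓb̃(1 − ‖e − x*‖)}`,
then the perturbed QVE has a solution `x̃` with `0 < x̃ < e` entrywise and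
`‖x̃ − x*‖ ≤ ξ*`. -/
theorem stmt2 {n : ℕ} (hn : 1 ≤ n)
    (a : Fin n → ℝ) (B : Matrix (Fin n) (Fin (n * n)) ℝ)
    (xs : Fin n → ℝ)
    (at_ : Fin n → ℝ) (Bt : Matrix (Fin n) (Fin (n * n)) ℝ)
    (e : Fin n → ℝ) (he : e = fun _ => (1 : ℝ))
    (heq : e = a + B *ᵥ kron e e)
    (hxs : xs = a + B *ᵥ kron xs xs)
    (hxs0 : ∀ i, 0 ≤ xs i) (hxs1 : ∀ i, xs i < e i)
    (L : Matrix (Fin n) (Fin n) ℝ)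
    (hL : L = 1 - B * (kronVecId xs + kronIdVec xs))
    (hLinv : IsUnit L)
    (heqt : e = at_ + Bt *ᵥ kron e e)
    (ΔB : Matrix (Fin n) (Fin (n * n)) ℝ) (hΔB : ΔB = Bt - B)
    (δ ℓ bt d : ℝ)
    (hδ : δ = matNorm ΔB) (hℓ : ℓ = matNorm L⁻¹) (hbt : bt = matNorm Bt)
    (hd : d = ‖kron xs xs - kron e e‖)
    (hcond1 : ‖xs‖ * δ + Real.sqrt (bt * d * δ) ≤ 1 / (2 * ℓ))
    (hcond2 : max (1 - 2 * ℓ * bt * (1 - ‖xs‖)) (1 - 2 * ℓ * bt * (1 - ‖e - xs‖)) <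
      2 * ℓ * δ * ‖xs‖ +
        Real.sqrt ((1 - 2 * ℓ * δ * ‖xs‖) ^ 2 - 4 * ℓ ^ 2 * bt * d * δ)) :
    ∃ xt : Fin n → ℝ, xt = at_ + Bt *ᵥ kron xt xt ∧
      (∀ i, 0 < xt i ∧ xt i < e i) ∧
      ‖xt - xs‖ ≤ 2 * ℓ * d * δ /
        (1 - 2 * ℓ * δ * ‖xs‖ +
          Real.sqrt ((1 - 2 * ℓ * δ * ‖xs‖) ^ 2 - 4 * ℓ ^ 2 * bt * d * δ)) := by
  have hn0 : 0 < n := hn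
  have hδ0 : 0 ≤ δ := by rw [hδ]; exact matNorm_nonneg hn0 _
  have hℓ0 : 0 ≤ ℓ := by rw [hℓ]; exact matNorm_nonneg hn0 _
  have hbt0 : 0 ≤ bt := by rw [hbt]; exact matNorm_nonneg hn0 _
  have hd0 : 0 ≤ d := by rw [hd]; exact norm_nonneg _
  have hxsn : 0 ≤ ‖xs‖ := norm_nonneg _
  have hℓpos : 0 < ℓ := by
    rcases hℓ0.lt_or_eq with h | h
    · exact h
    · exfalso
      rw [← h] at hcond2
      norm_num [Real.sqrt_one] at hcond2
  set c := 1 - 2 * ℓ * δ * ‖xs‖ with hc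
  set s := Real.sqrt (c ^ 2 - 4 * ℓ ^ 2 * bt * d * δ) with hs
  set ξ := 2 * ℓ * d * δ / (c + s) with hξdef
  have h2ℓ : (0:ℝ) < 2 * ℓ := by positivity
  have hsqnn : 0 ≤ bt * d * δ := by positivity
  have h1' := (le_div_iff₀ h2ℓ).mp hcond1
  have hsqrtnn := Real.sqrt_nonneg (bt * d * δ)
  have hcge : 2 * ℓ * Real.sqrt (bt * d * δ) ≤ c := by rw [hc]; nlinarith
  have hc0 : 0 ≤ c :=
    le_trans (mul_nonneg (mul_nonneg (by norm_num) hℓ0) hsqrtnn) hcge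
  have hsq := Real.sq_sqrt hsqnn
  have hD0 : 0 ≤ c ^ 2 - 4 * ℓ ^ 2 * bt * d * δ := by
    nlinarith [mul_self_le_mul_self (mul_nonneg (mul_nonneg (by norm_num : (0:ℝ) ≤ 2) hℓ0) hsqrtnn) hcge]
  have hs0 : 0 ≤ s := Real.sqrt_nonneg _
  have hs2 : s ^ 2 = c ^ 2 - 4 * ℓ ^ 2 * bt * d * δ := Real.sq_sqrt hD0
  have hsc : s ≤ c := by
    rw [hs]
    calc Real.sqrt (c ^ 2 - 4 * ℓ ^ 2 * bt * d * δ) ≤ Real.sqrt (c ^ 2) :=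
        Real.sqrt_le_sqrt (by nlinarith)
      _ = c := Real.sqrt_sq hc0
  have hbtpos : 0 < bt := by
    rcases hbt0.lt_or_eq with hq | hq
    · exact hq
    · exfalso
      have hm := lt_of_le_of_lt (le_max_left _ _) hcond2
      rw [← hq] at hm
      have hseqc : s = c := by
        rw [hs, ← hq]
        norm_num [Real.sqrt_sq hc0]
      simp only [mul_zero, zero_mul, sub_zero, mul_comm] at hm
      nlinarith [hm, hseqc, hc]
  have hℓbt : 0 < 2 * ℓ * bt := by positivity
  have hkey2 : (c + s) * ξ = 2 * ℓ * d * δ := by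
    by_cases hcs : c + s = 0
    · have hc' : c = 0 := by linarith
      have hs' : s = 0 := by linarith
      have hdd : d * δ = 0 := by nlinarith [hs2]
      rw [hξdef, hcs, div_zero, mul_zero]
      linear_combination (-2) * ℓ * hdd
    · rw [hξdef]
      field_simp
  have hkey1 : 2 * ℓ * bt * ξ = c - s := by
    by_cases hcs : c + s = 0
    · have hc' : c = 0 := by linarith
      have hs' : s = 0 := by linarith
      rw [hξdef, hcs, div_zero, mul_zero, hc', hs', sub_zero]
    · have hfac : (c - s) * (c + s) = 4 * ℓ ^ 2 * bt * d * δ := by linear_combination -hs2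
      rw [hξdef, ← mul_div_assoc,
        show 2 * ℓ * bt * (2 * ℓ * d * δ) = (c - s) * (c + s) by linear_combination -hfac]
      exact mul_div_cancel_right₀ _ hcs
  have hξnn : 0 ≤ ξ := by
    rw [hξdef]
    exact div_nonneg (by positivity) (by linarith)
  have hgfix : ℓ * (δ * d) + 2 * ℓ * δ * ‖xs‖ * ξ + ℓ * bt * ξ ^ 2 = ξ := by
    linear_combination (ξ / 2) * hkey1 - (1 / 2) * hkey2 + ξ * hc
  have hup1 : ξ < 1 - ‖xs‖ := by
    have hm := lt_of_le_of_lt (le_max_left _ _) hcond2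
    have hlt : 2 * ℓ * bt * ξ < 2 * ℓ * bt * (1 - ‖xs‖) := by
      rw [hkey1]; linarith [hm]
    exact (mul_lt_mul_iff_right₀ hℓbt).mp hlt
  have hup2 : ξ < 1 - ‖e - xs‖ := by
    have hm := lt_of_le_of_lt (le_max_right _ _) hcond2
    have hlt : 2 * ℓ * bt * ξ < 2 * ℓ * bt * (1 - ‖e - xs‖) := by
      rw [hkey1]; linarith [hm]
    exact (mul_lt_mul_iff_right₀ hℓbt).mp hlt
  -- nonnegativity helpers
  have hB2 : 0 ≤ 2 * ℓ * δ * ‖xs‖ :=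
    mul_nonneg (mul_nonneg (mul_nonneg (by norm_num) hℓ0) hδ0) hxsn
  have hC2 : 0 ≤ ℓ * bt := mul_nonneg hℓ0 hbt0
  have hA2 : 0 ≤ ℓ * (δ * d) := mul_nonneg hℓ0 (mul_nonneg hδ0 hd0)
  have hmono : ∀ x y : ℝ, 0 ≤ x → x ≤ y →
      ℓ * (δ * d) + 2 * ℓ * δ * ‖xs‖ * x + ℓ * bt * x ^ 2 ≤
      ℓ * (δ * d) + 2 * ℓ * δ * ‖xs‖ * y + ℓ * bt * y ^ 2 := by
    intro x y hx hxy
    nlinarith [mul_nonneg hB2 (sub_nonneg.2 hxy),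
      mul_nonneg hC2 (mul_nonneg (show (0:ℝ) ≤ y + x by linarith) (sub_nonneg.2 hxy))]
  -- the fixed point map
  obtain ⟨F, hF⟩ : ∃ F : (Fin n → ℝ) → Fin n → ℝ, F = Fmap L⁻¹ ΔB Bt xs e := ⟨_, rfl⟩
  have hFle : ∀ v : Fin n → ℝ,
      ‖F v‖ ≤ ℓ * (δ * d) + 2 * ℓ * δ * ‖xs‖ * ‖v‖ + ℓ * bt * ‖v‖ ^ 2 := by
    intro v
    rw [hF]
    have h0 := Fmap_norm_le hn0 L⁻¹ ΔB Bt xs e v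
    rw [← hℓ, ← hδ, ← hbt, ← hd] at h0
    refine le_trans h0 (le_of_eq (by ring))
  have hFdiff : ∀ v w : Fin n → ℝ,
      ‖F v - F w‖ ≤ (2 * ℓ * δ * ‖xs‖ + ℓ * bt * (‖v‖ + ‖w‖)) * ‖v - w‖ := by
    intro v w
    rw [hF]
    have h0 := Fmap_diff_le hn0 L⁻¹ ΔB Bt xs e v w
    rw [← hℓ, ← hδ, ← hbt] at h0
    refine le_trans h0 (le_of_eq (by ring))
  -- iteration sequences
  obtain ⟨hseq, hseq0, hseqS⟩ : ∃ g : ℕ → Fin n → ℝ, g 0 = 0 ∧ ∀ k, g (k + 1) = F (g k) :=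
    ⟨fun k => Nat.rec 0 (fun _ x => F x) k, rfl, fun _ => rfl⟩
  obtain ⟨xiseq, xiseq0, xiseqS⟩ : ∃ g : ℕ → ℝ, g 0 = 0 ∧ ∀ k, g (k + 1) =
      ℓ * (δ * d) + 2 * ℓ * δ * ‖xs‖ * g k + ℓ * bt * (g k) ^ 2 :=
    ⟨fun k => Nat.rec 0 (fun _ x => ℓ * (δ * d) + 2 * ℓ * δ * ‖xs‖ * x + ℓ * bt * x ^ 2) k,
      rfl, fun _ => rfl⟩
  have hxi : ∀ k, 0 ≤ xiseq k ∧ xiseq k ≤ xiseq (k + 1) ∧ xiseq k ≤ ξ := by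
    intro k
    induction k with
    | zero =>
      refine ⟨xiseq0.ge, ?_, ?_⟩
      · rw [xiseq0, xiseqS, xiseq0]; nlinarith [hA2]
      · rw [xiseq0]; exact hξnn
    | succ k ih =>
      obtain ⟨h0k, hk1, hkξ⟩ := ih
      have h0k1 : 0 ≤ xiseq (k + 1) := le_trans h0k hk1
      refine ⟨h0k1, ?_, ?_⟩
      · have h2 := hmono _ _ h0k hk1
        rw [← xiseqS k, ← xiseqS (k + 1)] at h2
        exact h2
      · have h2 := hmono _ _ h0k hkξ
        rw [← xiseqS k, hgfix] at h2
        exact h2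
  have hxiξ : ∀ k, xiseq k ≤ ξ := fun k => (hxi k).2.2
  have hxi0 : ∀ k, 0 ≤ xiseq k := fun k => (hxi k).1
  have hximono : Monotone xiseq := monotone_nat_of_le_succ fun k => (hxi k).2.1
  have hhbd : ∀ k, ‖hseq k‖ ≤ xiseq k := by
    intro k
    induction k with
    | zero => rw [hseq0, xiseq0]; simp
    | succ k ih =>
      rw [hseqS, xiseqS]
      exact le_trans (hFle (hseq k)) (hmono _ _ (norm_nonneg _) ih)
  have hhseqξ : ∀ k, ‖hseq k‖ ≤ ξ := fun k => (hhbd k).trans (hxiξ k)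
  have hstep : ∀ k, ‖hseq (k + 1) - hseq k‖ ≤ xiseq (k + 1) - xiseq k := by
    intro k
    induction k with
    | zero =>
      have h0 := hFle 0
      simp only [norm_zero, mul_zero] at h0
      rw [hseqS 0, hseq0, sub_zero, xiseqS 0, xiseq0]
      nlinarith [h0]
    | succ k ih =>
      rw [hseqS (k + 1)]
      have hrw : F (hseq k) = hseq (k + 1) := (hseqS k).symm
      calc ‖F (hseq (k + 1)) - hseq (k + 1)‖
          = ‖F (hseq (k + 1)) - F (hseq k)‖ := by rw [hrw]
        _
          ≤ (2 * ℓ * δ * ‖xs‖ + ℓ * bt * (‖hseq (k + 1)‖ + ‖hseq k‖)) * ‖hseq (k + 1) - hseq k‖ :=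
            hFdiff _ _
        _ ≤ (2 * ℓ * δ * ‖xs‖ + ℓ * bt * (xiseq (k + 1) + xiseq k)) * (xiseq (k + 1) - xiseq k) := by
            refine mul_le_mul ?_ ih (norm_nonneg _) ?_
            · exact add_le_add_right
                (mul_le_mul_of_nonneg_left (add_le_add (hhbd _) (hhbd _)) hC2) _
            · exact add_nonneg hB2 (mul_nonneg hC2 (add_nonneg (hxi0 _) (hxi0 _)))
        _ = xiseq (k + 2) - xiseq (k + 1) := by rw [xiseqS (k + 1), xiseqS k]; ring
  have htele : ∀ k m, ‖hseq (k + m) - hseq k‖ ≤ xiseq (k + m) - xiseq k := by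
    intro k m
    induction m with
    | zero => simp
    | succ m ih =>
      have h1 := hstep (k + m)
      show ‖hseq (k + m + 1) - hseq k‖ ≤ xiseq (k + m + 1) - xiseq k
      calc ‖hseq (k + m + 1) - hseq k‖
          = ‖hseq (k + m + 1) - hseq (k + m) + (hseq (k + m) - hseq k)‖ := by
            rw [sub_add_sub_cancel]
        _ ≤ ‖hseq (k + m + 1) - hseq (k + m)‖ + ‖hseq (k + m) - hseq k‖ := norm_add_le _ _
        _ ≤ xiseq (k + m + 1) - xiseq (k + m) + (xiseq (k + m) - xiseq k) := add_le_add h1 ih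
        _ = xiseq (k + m + 1) - xiseq k := by ring
  have hbdd : BddAbove (Set.range xiseq) := ⟨ξ, by rintro _ ⟨k, rfl⟩; exact hxiξ k⟩
  set Ξ := ⨆ k, xiseq k with hΞdef
  have hΞten : Tendsto xiseq atTop (nhds Ξ) := tendsto_atTop_ciSup hximono hbdd
  have hxiΞ : ∀ k, xiseq k ≤ Ξ := fun k => le_ciSup hbdd k
  have hcau : CauchySeq hseq := by
    apply cauchySeq_of_le_tendsto_0 (fun N => Ξ - xiseq N)
    · intro m m' N hm hm'
      rcases le_total m m' with h | h
      · rw [dist_eq_norm, norm_sub_rev]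
        obtain ⟨t, rfl⟩ := Nat.exists_eq_add_of_le h
        have := htele m t
        have := hxiΞ (m + t)
        have := hximono hm
        linarith [htele m t, hxiΞ (m + t), hximono hm]
      · rw [dist_eq_norm]
        obtain ⟨t, rfl⟩ := Nat.exists_eq_add_of_le h
        linarith [htele m' t, hxiΞ (m' + t), hximono hm']
    · have h0 : Tendsto (fun N => Ξ - xiseq N) atTop (nhds (Ξ - Ξ)) :=
        tendsto_const_nhds.sub hΞten
      simpa using h0
  obtain ⟨hl, hlim⟩ := cauchySeq_tendsto_of_complete hcau
  have hlξ : ‖hl‖ ≤ ξ :=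
    le_of_tendsto hlim.norm (Eventually.of_forall fun k => hhseqξ k)
  have hKlip : ∀ k, ‖F hl - hl‖ ≤
      (2 * ℓ * δ * ‖xs‖ + 2 * ℓ * bt * ξ) * ‖hl - hseq k‖ + ‖hseq (k + 1) - hl‖ := by
    intro k
    have h1 : ‖F hl - F (hseq k)‖ ≤
        (2 * ℓ * δ * ‖xs‖ + 2 * ℓ * bt * ξ) * ‖hl - hseq k‖ := by
      refine le_trans (hFdiff hl (hseq k)) (mul_le_mul_of_nonneg_right ?_ (norm_nonneg _))
      have h2 := hhseqξ k
      have h4 : ℓ * bt * (‖hl‖ + ‖hseq k‖) ≤ ℓ * bt * (ξ + ξ) :=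
        mul_le_mul_of_nonneg_left (add_le_add hlξ h2) hC2
      calc 2 * ℓ * δ * ‖xs‖ + ℓ * bt * (‖hl‖ + ‖hseq k‖)
          ≤ 2 * ℓ * δ * ‖xs‖ + ℓ * bt * (ξ + ξ) := by linarith
        _ = 2 * ℓ * δ * ‖xs‖ + 2 * ℓ * bt * ξ := by ring
    have h3 : ‖F hl - hl‖ ≤ ‖F hl - F (hseq k)‖ + ‖F (hseq k) - hl‖ := by
      have := dist_triangle (F hl) (F (hseq k)) hl
      simpa [dist_eq_norm] using this
    rw [← hseqS k] at h3 h1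
    linarith [h1, h3]
  have hFlh : F hl = hl := by
    have t1 : Tendsto (fun k => ‖hl - hseq k‖) atTop (nhds 0) := by
      have := (hlim.const_sub hl).norm
      simpa using this
    have t2 : Tendsto (fun k => ‖hseq (k + 1) - hl‖) atTop (nhds 0) := by
      have := ((hlim.comp (tendsto_add_atTop_nat 1)).sub_const hl).norm
      simpa using this
    have hten : Tendsto (fun k =>
        (2 * ℓ * δ * ‖xs‖ + 2 * ℓ * bt * ξ) * ‖hl - hseq k‖ + ‖hseq (k + 1) - hl‖)
        atTop (nhds 0) := by
      have h5 := (t1.const_mul (2 * ℓ * δ * ‖xs‖ + 2 * ℓ * bt * ξ)).add t2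
      rw [mul_zero, add_zero] at h5
      exact h5
    have hle0 : ‖F hl - hl‖ ≤ 0 := ge_of_tendsto hten (Eventually.of_forall hKlip)
    have : F hl - hl = 0 := norm_le_zero_iff.mp hle0
    exact sub_eq_zero.mp this
  rw [hF] at hFlh
  refine ⟨xs + hl, Fmap_fixed a B xs at_ Bt e heq hxs L hL hLinv heqt ΔB hΔB hl hFlh, ?_, ?_⟩
  · intro i
    have hli1 : hl i ≤ ‖hl‖ :=
      (le_abs_self _).trans (by simpa [Real.norm_eq_abs] using norm_le_pi_norm hl i)
    have hli2 : -‖hl‖ ≤ hl i := by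
      have := (abs_le.mp (by simpa [Real.norm_eq_abs] using norm_le_pi_norm hl i)).1
      linarith
    have hxsi : xs i ≤ ‖xs‖ :=
      (le_abs_self _).trans (by simpa [Real.norm_eq_abs] using norm_le_pi_norm xs i)
    have hexsi : e i - xs i ≤ ‖e - xs‖ := by
      have := (le_abs_self ((e - xs) i)).trans
        (by simpa [Real.norm_eq_abs] using norm_le_pi_norm (e - xs) i)
      simpa using this
    have hei : e i = 1 := by rw [he]
    constructor
    · simp only [Pi.add_apply]
      linarith [hup2, hlξ, hli2, hexsi]
    · simp only [Pi.add_apply]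
      linarith [hup1, hlξ, hli1, hxsi]
  · have hsub : xs + hl - xs = hl := by
      funext i; simp
    rw [hsub]
    exact hlξ

end
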